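/- arXiv:1710.08854 — 3 statements merged into one kernel-verified Lean document; each statement's English description precedes it below -/
import Mathlib

section
/- Glivenko's theorem (intuitionistic version): if A and all formulas in Γ contain no occurrence of the universal quantifier ∀, then Γ ⊢_NK A if and only if Γ ⊢_NJ ¬¬A, and also if and only if Γ, ¬A ⊢_NJ ⊥. -/
/-- First-order terms: variables (de Bruijn style indices for bound variables
are merged with free variable indices) and function symbols with arguments. -/
inductive Term where
  | var : ℕ → Term
  | fn : ℕ → (ℕ → Term) → Term

/-- Lift (shift by one) all variables ≥ k. -/
def Term.lift (k : ℕ) : Term → Term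
  | .var n => .var (if n < k then n else n + 1)
  | .fn f a => .fn f (fun i => (a i).lift k)

/-- Capture-avoiding substitution of the term `s` for variable `k` (de Bruijn). -/
def Term.subst (k : ℕ) (s : Term) : Term → Term
  | .var n => if n < k then .var n else if n = k then s else .var (n - 1)
  | .fn f a => .fn f (fun i => Term.subst k s (a i))

/-- Free variables of a term. -/
def Term.fv : Term → Set ℕ
  | .var n => {n}
  | .fn _ a => ⋃ i, (a i).fv

/-- First-order formulas with primitive negation, de Bruijn binders. -/
inductive Formula where
  | pred : ℕ → (ℕ → Term) → Formula
  | bot : Formula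
  | top : Formula
  | neg : Formula → Formula
  | conj : Formula → Formula → Formula
  | disj : Formula → Formula → Formula
  | impl : Formula → Formula → Formula
  | all : Formula → Formula
  | ex : Formula → Formula

def Formula.lift (k : ℕ) : Formula → Formula
  | .pred r a => .pred r (fun i => (a i).lift k)
  | .bot => .bot
  | .top => .top
  | .neg A => .neg (A.lift k)
  | .conj A B => .conj (A.lift k) (B.lift k)
  | .disj A B => .disj (A.lift k) (B.lift k)
  | .impl A B => .impl (A.lift k) (B.lift k)
  | .all A => .all (A.lift (k + 1))
  | .ex A => .ex (A.lift (k + 1))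

/-- Capture-avoiding substitution of term `s` for variable `k` in a formula. -/
def Formula.subst (k : ℕ) (s : Term) : Formula → Formula
  | .pred r a => .pred r (fun i => Term.subst k s (a i))
  | .bot => .bot
  | .top => .top
  | .neg A => .neg (A.subst k s)
  | .conj A B => .conj (A.subst k s) (B.subst k s)
  | .disj A B => .disj (A.subst k s) (B.subst k s)
  | .impl A B => .impl (A.subst k s) (B.subst k s)
  | .all A => .all (A.subst (k + 1) (s.lift 0))
  | .ex A => .ex (A.subst (k + 1) (s.lift 0))

/-- Free variables of a formula. -/
def Formula.fv : Formula → Set ℕ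
  | .pred _ a => ⋃ i, (a i).fv
  | .bot => ∅
  | .top => ∅
  | .neg A => A.fv
  | .conj A B => A.fv ∪ B.fv
  | .disj A B => A.fv ∪ B.fv
  | .impl A B => A.fv ∪ B.fv
  | .all A => {n | n + 1 ∈ A.fv}
  | .ex A => {n | n + 1 ∈ A.fv}

/-- Object-level biconditional, as a defined connective. -/
def Formula.fIff (A B : Formula) : Formula := .conj (.impl A B) (.impl B A)

/-- `A` contains no occurrence of the universal quantifier ∀. -/
def Formula.forallFree : Formula → Prop
  | .pred _ _ => True
  | .bot => True
  | .top => True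
  | .neg A => A.forallFree
  | .conj A B => A.forallFree ∧ B.forallFree
  | .disj A B => A.forallFree ∧ B.forallFree
  | .impl A B => A.forallFree ∧ B.forallFree
  | .all _ => False
  | .ex A => A.forallFree

/-- `A` contains no occurrence of implication →. -/
def Formula.impFree : Formula → Prop
  | .pred _ _ => True
  | .bot => True
  | .top => True
  | .neg A => A.impFree
  | .conj A B => A.impFree ∧ B.impFree
  | .disj A B => A.impFree ∧ B.impFree
  | .impl _ _ => False
  | .all A => A.impFree
  | .ex A => A.impFree

/-- The minimal translation (·)^m. -/
def Formula.mtr : Formula → Formula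
  | .pred r a => .pred r a
  | .bot => .bot
  | .top => .top
  | .neg A => .neg A.mtr
  | .conj A B => .conj A.mtr B.mtr
  | .disj A B => .disj A.mtr B.mtr
  | .impl A B => .disj (.neg A.mtr) B.mtr
  | .all A => .neg (.ex (.neg A.mtr))
  | .ex A => .ex A.mtr

/-- The intuitionistic translation (·)^j. -/
def Formula.jtr : Formula → Formula
  | .pred r a => .pred r a
  | .bot => .bot
  | .top => .top
  | .neg A => .neg A.jtr
  | .conj A B => .conj A.jtr B.jtr
  | .disj A B => .disj A.jtr B.jtr
  | .impl A B => .impl A.jtr B.jtr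
  | .all A => .neg (.ex (.neg A.jtr))
  | .ex A => .ex A.jtr

/-- Negative formulas: built from negated atoms, ⊥, ⊤ using only ¬, ∧, →, ∀. -/
inductive Formula.Negative : Formula → Prop where
  | negAtom : ∀ r a, Formula.Negative (.neg (.pred r a))
  | bot : Formula.Negative .bot
  | top : Formula.Negative .top
  | neg : ∀ {A}, Formula.Negative A → Formula.Negative (.neg A)
  | conj : ∀ {A B}, Formula.Negative A → Formula.Negative B → Formula.Negative (.conj A B)
  | impl : ∀ {A B}, Formula.Negative A → Formula.Negative B → Formula.Negative (.impl A B)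
  | all : ∀ {A}, Formula.Negative A → Formula.Negative (.all A)

/-- Natural deduction derivability; the flags `efq`, `raa` tell whether the
ex falso quodlibet and reductio ad absurdum rules are available.  `Deriv efq raa Γ A`
means `A` is derivable with undischarged assumptions among `Γ`. -/
inductive Deriv (efq raa : Bool) : Set Formula → Formula → Prop where
  | hyp : ∀ {Γ A}, A ∈ Γ → Deriv efq raa Γ A
  | topI : ∀ {Γ}, Deriv efq raa Γ .top
  | negI : ∀ {Γ A}, Deriv efq raa (insert A Γ) .bot → Deriv efq raa Γ (.neg A)
  | negE : ∀ {Γ A}, Deriv efq raa Γ (.neg A) → Deriv efq raa Γ A → Deriv efq raa Γ .bot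
  | conjI : ∀ {Γ A B}, Deriv efq raa Γ A → Deriv efq raa Γ B → Deriv efq raa Γ (.conj A B)
  | conjE1 : ∀ {Γ A B}, Deriv efq raa Γ (.conj A B) → Deriv efq raa Γ A
  | conjE2 : ∀ {Γ A B}, Deriv efq raa Γ (.conj A B) → Deriv efq raa Γ B
  | disjI1 : ∀ {Γ A B}, Deriv efq raa Γ A → Deriv efq raa Γ (.disj A B)
  | disjI2 : ∀ {Γ A B}, Deriv efq raa Γ B → Deriv efq raa Γ (.disj A B)
  | disjE : ∀ {Γ A B C}, Deriv efq raa Γ (.disj A B) → Deriv efq raa (insert A Γ) C →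
      Deriv efq raa (insert B Γ) C → Deriv efq raa Γ C
  | implI : ∀ {Γ A B}, Deriv efq raa (insert A Γ) B → Deriv efq raa Γ (.impl A B)
  | implE : ∀ {Γ A B}, Deriv efq raa Γ (.impl A B) → Deriv efq raa Γ A → Deriv efq raa Γ B
  | allI : ∀ {Γ A}, Deriv efq raa (Formula.lift 0 '' Γ) A → Deriv efq raa Γ (.all A)
  | allE : ∀ {Γ A} (t : Term), Deriv efq raa Γ (.all A) → Deriv efq raa Γ (A.subst 0 t)
  | exI : ∀ {Γ A} (t : Term), Deriv efq raa Γ (A.subst 0 t) → Deriv efq raa Γ (.ex A)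
  | exE : ∀ {Γ A C}, Deriv efq raa Γ (.ex A) →
      Deriv efq raa (insert A (Formula.lift 0 '' Γ)) (C.lift 0) → Deriv efq raa Γ C
  | efqR : ∀ {Γ A}, efq = true → Deriv efq raa Γ .bot → Deriv efq raa Γ A
  | raaR : ∀ {Γ A}, raa = true → Deriv efq raa (insert (.neg A) Γ) .bot → Deriv efq raa Γ A

/-- Minimal natural deduction. -/
def NM : Set Formula → Formula → Prop := Deriv false false
/-- Intuitionistic natural deduction. -/
def NJ : Set Formula → Formula → Prop := Deriv true false
/-- Classical natural deduction (minimal + reductio ad absurdum). -/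
def NK : Set Formula → Formula → Prop := Deriv false true

namespace Deriv

lemma weaken {e r : Bool} {Γ Δ : Set Formula} {A : Formula}
    (h : Deriv e r Γ A) (hs : Γ ⊆ Δ) : Deriv e r Δ A := by
  induction h generalizing Δ with
  | hyp h => exact .hyp (hs h)
  | topI => exact .topI
  | negI _ ih => exact .negI (ih (Set.insert_subset_insert hs))
  | negE _ _ ih1 ih2 => exact .negE (ih1 hs) (ih2 hs)
  | conjI _ _ ih1 ih2 => exact .conjI (ih1 hs) (ih2 hs)
  | conjE1 _ ih => exact .conjE1 (ih hs)
  | conjE2 _ ih => exact .conjE2 (ih hs)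
  | disjI1 _ ih => exact .disjI1 (ih hs)
  | disjI2 _ ih => exact .disjI2 (ih hs)
  | disjE _ _ _ ih1 ih2 ih3 =>
      exact .disjE (ih1 hs) (ih2 (Set.insert_subset_insert hs))
        (ih3 (Set.insert_subset_insert hs))
  | implI _ ih => exact .implI (ih (Set.insert_subset_insert hs))
  | implE _ _ ih1 ih2 => exact .implE (ih1 hs) (ih2 hs)
  | allI _ ih => exact .allI (ih (Set.image_mono hs))
  | allE t _ ih => exact .allE t (ih hs)
  | exI t _ ih => exact .exI t (ih hs)
  | exE _ _ ih1 ih2 =>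
      exact .exE (ih1 hs) (ih2 (Set.insert_subset_insert (Set.image_mono hs)))
  | efqR he _ ih => exact .efqR he (ih hs)
  | raaR hr _ ih => exact .raaR hr (ih (Set.insert_subset_insert hs))

/-- Double negation introduction. -/
lemma dni {e r : Bool} {Γ : Set Formula} {A : Formula}
    (h : Deriv e r Γ A) : Deriv e r Γ (.neg (.neg A)) :=
  .negI (.negE (.hyp (Set.mem_insert _ _)) (h.weaken (Set.subset_insert _ _)))

/-- From ¬¬⊥ infer ⊥. -/
lemma dniBot {e r : Bool} {Γ : Set Formula}
    (h : Deriv e r Γ (.neg (.neg .bot))) : Deriv e r Γ .bot :=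
  .negE h (.negI (.hyp (Set.mem_insert _ _)))

/-- Triple negation to single negation. -/
lemma tneg {e r : Bool} {Γ : Set Formula} {A : Formula}
    (h : Deriv e r Γ (.neg (.neg (.neg A)))) : Deriv e r Γ (.neg A) :=
  .negI (.negE (h.weaken (Set.subset_insert _ _)) (dni (.hyp (Set.mem_insert _ _))))

end Deriv

/-- Intuitionistic derivations are classical (efq is derivable from raa). -/
lemma nj_to_nk {Γ : Set Formula} {A : Formula}
    (h : Deriv true false Γ A) : Deriv false true Γ A := by
  induction h with
  | hyp h => exact .hyp h
  | topI => exact .topI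
  | negI _ ih => exact .negI ih
  | negE _ _ ih1 ih2 => exact .negE ih1 ih2
  | conjI _ _ ih1 ih2 => exact .conjI ih1 ih2
  | conjE1 _ ih => exact .conjE1 ih
  | conjE2 _ ih => exact .conjE2 ih
  | disjI1 _ ih => exact .disjI1 ih
  | disjI2 _ ih => exact .disjI2 ih
  | disjE _ _ _ ih1 ih2 ih3 => exact .disjE ih1 ih2 ih3
  | implI _ ih => exact .implI ih
  | implE _ _ ih1 ih2 => exact .implE ih1 ih2
  | allI _ ih => exact .allI ih
  | allE t _ ih => exact .allE t ih
  | exI t _ ih => exact .exI t ih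
  | exE _ _ ih1 ih2 => exact .exE ih1 ih2
  | efqR _ _ ih => exact .raaR rfl (ih.weaken (Set.subset_insert _ _))
  | raaR hr => exact absurd hr (by simp)

lemma jtr_lift (k : ℕ) (A : Formula) : (A.lift k).jtr = A.jtr.lift k := by
  induction A generalizing k with
  | pred r a => rfl
  | bot => rfl
  | top => rfl
  | neg A ih => simp [Formula.lift, Formula.jtr, ih]
  | conj A B ih1 ih2 => simp [Formula.lift, Formula.jtr, ih1, ih2]
  | disj A B ih1 ih2 => simp [Formula.lift, Formula.jtr, ih1, ih2]
  | impl A B ih1 ih2 => simp [Formula.lift, Formula.jtr, ih1, ih2]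
  | all A ih => simp [Formula.lift, Formula.jtr, ih]
  | ex A ih => simp [Formula.lift, Formula.jtr, ih]

lemma jtr_subst (k : ℕ) (s : Term) (A : Formula) :
    (A.subst k s).jtr = A.jtr.subst k s := by
  induction A generalizing k s with
  | pred r a => rfl
  | bot => rfl
  | top => rfl
  | neg A ih => simp [Formula.subst, Formula.jtr, ih]
  | conj A B ih1 ih2 => simp [Formula.subst, Formula.jtr, ih1, ih2]
  | disj A B ih1 ih2 => simp [Formula.subst, Formula.jtr, ih1, ih2]
  | impl A B ih1 ih2 => simp [Formula.subst, Formula.jtr, ih1, ih2]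
  | all A ih => simp [Formula.subst, Formula.jtr, ih]
  | ex A ih => simp [Formula.subst, Formula.jtr, ih]

lemma jtr_eq_self {A : Formula} (h : A.forallFree) : A.jtr = A := by
  induction A with
  | pred r a => rfl
  | bot => rfl
  | top => rfl
  | neg A ih => simp [Formula.jtr, ih h]
  | conj A B ih1 ih2 => exact by simp [Formula.jtr, ih1 h.1, ih2 h.2]
  | disj A B ih1 ih2 => exact by simp [Formula.jtr, ih1 h.1, ih2 h.2]
  | impl A B ih1 ih2 => exact by simp [Formula.jtr, ih1 h.1, ih2 h.2]
  | all A ih => exact absurd h (by simp [Formula.forallFree])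
  | ex A ih => simp [Formula.jtr, ih h]

/-- Main Glivenko lemma: an NK-derivation of A yields an NJ-derivation of
¬¬(A^j) from the j-translated context. -/
lemma glivenko_main {Γ : Set Formula} {A : Formula} (h : Deriv false true Γ A) :
    Deriv true false (Formula.jtr '' Γ) (.neg (.neg A.jtr)) := by
  induction h with
  | hyp h => exact Deriv.dni (.hyp (Set.mem_image_of_mem _ h))
  | topI => exact Deriv.dni .topI
  | @negI Γ A _ ih =>
      rw [Set.image_insert_eq] at ih
      exact Deriv.dni (.negI (Deriv.dniBot ih))
  | negE _ _ ih1 ih2 => exact Deriv.dni (.efqR rfl (.negE ih1 ih2))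
  | @conjI Γ A B _ _ ih1 ih2 =>
      refine .negI (.negE (ih1.weaken (Set.subset_insert _ _)) (.negI (.negE (ih2.weaken ((Set.subset_insert _ _).trans (Set.subset_insert _ _))) (.negI (.negE (A := .conj A.jtr B.jtr) (.hyp ?_) (.conjI (.hyp ?_) (.hyp ?_)))))))
      · exact Set.mem_insert_of_mem _ (Set.mem_insert_of_mem _ (Set.mem_insert _ _))
      · exact Set.mem_insert_of_mem _ (Set.mem_insert _ _)
      · exact Set.mem_insert _ _
  | @conjE1 Γ A B _ ih =>
      exact .negI (.negE (ih.weaken (Set.subset_insert _ _))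
        (.negI (.negE (.hyp (Set.mem_insert_of_mem _ (Set.mem_insert _ _)))
          (.conjE1 (.hyp (Set.mem_insert _ _))))))
  | @conjE2 Γ A B _ ih =>
      exact .negI (.negE (ih.weaken (Set.subset_insert _ _))
        (.negI (.negE (.hyp (Set.mem_insert_of_mem _ (Set.mem_insert _ _)))
          (.conjE2 (.hyp (Set.mem_insert _ _))))))
  | @disjI1 Γ A B _ ih =>
      exact .negI (.negE (ih.weaken (Set.subset_insert _ _))
        (.negI (.negE (.hyp (Set.mem_insert_of_mem _ (Set.mem_insert _ _)))
          (.disjI1 (.hyp (Set.mem_insert _ _))))))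
  | @disjI2 Γ A B _ ih =>
      exact .negI (.negE (ih.weaken (Set.subset_insert _ _))
        (.negI (.negE (.hyp (Set.mem_insert_of_mem _ (Set.mem_insert _ _)))
          (.disjI2 (.hyp (Set.mem_insert _ _))))))
  | @disjE Γ A B C _ _ _ ih1 ih2 ih3 =>
      rw [Set.image_insert_eq] at ih2 ih3
      refine .negI (.negE (ih1.weaken (Set.subset_insert _ _)) (.negI (.disjE (.hyp (Set.mem_insert _ _)) ?_ ?_)))
      · refine .negE (ih2.weaken (Set.insert_subset_insert ((Set.subset_insert _ _).trans (Set.subset_insert _ _)))) (.hyp ?_)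
        exact Set.mem_insert_of_mem _ (Set.mem_insert_of_mem _ (Set.mem_insert _ _))
      · refine .negE (ih3.weaken (Set.insert_subset_insert ((Set.subset_insert _ _).trans (Set.subset_insert _ _)))) (.hyp ?_)
        exact Set.mem_insert_of_mem _ (Set.mem_insert_of_mem _ (Set.mem_insert _ _))
  | @implI Γ A B _ ih =>
      rw [Set.image_insert_eq] at ih
      refine .negI ?_
      -- context: insert ¬(A→B) Γ
      have hnB : Deriv true false (insert (.neg (.impl A.jtr B.jtr)) (Formula.jtr '' Γ)) (.neg B.jtr) :=
        .negI (.negE (.hyp (Set.mem_insert_of_mem _ (Set.mem_insert _ _)))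
          (.implI (.hyp (Set.mem_insert_of_mem _ (Set.mem_insert _ _)))))
      have hnA : Deriv true false (insert (.neg (.impl A.jtr B.jtr)) (Formula.jtr '' Γ)) (.neg A.jtr) :=
        .negI (.negE (ih.weaken (Set.insert_subset_insert (Set.subset_insert _ _)))
          (hnB.weaken (Set.subset_insert _ _)))
      have hnnA : Deriv true false (insert (.neg (.impl A.jtr B.jtr)) (Formula.jtr '' Γ)) (.neg (.neg A.jtr)) :=
        .negI (.negE (.hyp (Set.mem_insert_of_mem _ (Set.mem_insert _ _)))
          (.implI (.efqR rfl (.negE (.hyp (Set.mem_insert_of_mem _ (Set.mem_insert _ _))) (.hyp (Set.mem_insert _ _))))))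
      exact .negE hnnA hnA
  | @implE Γ A B _ _ ih1 ih2 =>
      refine .negI (.negE (ih1.weaken (Set.subset_insert _ _)) (.negI (.negE (ih2.weaken ((Set.subset_insert _ _).trans (Set.subset_insert _ _))) (.negI (.negE (A := B.jtr) (.hyp ?_) (.implE (A := A.jtr) (.hyp ?_) (.hyp ?_)))))))
      · exact Set.mem_insert_of_mem _ (Set.mem_insert_of_mem _ (Set.mem_insert _ _))
      · exact Set.mem_insert_of_mem _ (Set.mem_insert _ _)
      · exact Set.mem_insert _ _
  | @allI Γ A _ ih =>
      have himg : Formula.jtr '' (Formula.lift 0 '' Γ) = Formula.lift 0 '' (Formula.jtr '' Γ) := by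
        rw [← Set.image_comp, ← Set.image_comp]
        exact Set.image_congr' (fun B => jtr_lift 0 B)
      rw [himg] at ih
      refine Deriv.dni (.negI (.exE (.hyp (Set.mem_insert _ _)) ?_))
      show Deriv true false (insert (.neg A.jtr) _) Formula.bot
      refine .negE (ih.weaken ?_) (.hyp (Set.mem_insert _ _))
      exact (Set.image_mono (Set.subset_insert _ _)).trans (Set.subset_insert _ _)
  | @allE Γ A t _ ih =>
      rw [show (A.subst 0 t).jtr = A.jtr.subst 0 t from jtr_subst 0 t A]
      refine .negI (.negE ((Deriv.tneg ih).weaken (Set.subset_insert _ _)) (.exI t ?_))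
      exact .hyp (Set.mem_insert _ _)
  | @exI Γ A t _ ih =>
      rw [show (A.subst 0 t).jtr = A.jtr.subst 0 t from jtr_subst 0 t A] at ih
      refine .negI (.negE (ih.weaken (Set.subset_insert _ _)) (.negI (.negE (.hyp (Set.mem_insert_of_mem _ (Set.mem_insert _ _))) (.exI t (.hyp (Set.mem_insert _ _))))))
  | @exE Γ A C _ _ ih1 ih2 =>
      rw [Set.image_insert_eq] at ih2
      have himg : Formula.jtr '' (Formula.lift 0 '' Γ) = Formula.lift 0 '' (Formula.jtr '' Γ) := by
        rw [← Set.image_comp, ← Set.image_comp]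
        exact Set.image_congr' (fun B => jtr_lift 0 B)
      rw [himg, jtr_lift 0 C] at ih2
      refine .negI (.negE (ih1.weaken (Set.subset_insert _ _)) (.negI (.exE (.hyp (Set.mem_insert _ _)) ?_)))
      show Deriv true false (insert A.jtr (Formula.lift 0 '' (insert (.ex A.jtr) (insert (.neg C.jtr) (Formula.jtr '' Γ))))) Formula.bot
      refine .negE (ih2.weaken (Set.insert_subset_insert (Set.image_mono ((Set.subset_insert _ _).trans (Set.subset_insert _ _))))) (.hyp ?_)
      · show Formula.neg (C.jtr.lift 0) ∈ _
        have : Formula.neg (C.jtr.lift 0) = Formula.lift 0 (.neg C.jtr) := rfl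
        rw [this]
        exact Set.mem_insert_of_mem _ (Set.mem_image_of_mem _ (Set.mem_insert_of_mem _ (Set.mem_insert _ _)))
  | efqR he => exact absurd he (by simp)
  | @raaR Γ A _ _ ih =>
      rw [Set.image_insert_eq] at ih
      exact .negI (Deriv.dniBot ih)

/-- Glivenko's theorem, intuitionistic version. -/
theorem glivenko_intuitionistic (Γ : Set Formula) (A : Formula)
    (hA : A.forallFree) (hΓ : ∀ B ∈ Γ, B.forallFree) :
    (NK Γ A ↔ NJ Γ (.neg (.neg A))) ∧
    (NK Γ A ↔ NJ (insert (.neg A) Γ) .bot) := by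
  unfold NK NJ
  have hΓeq : Formula.jtr '' Γ = Γ := by
    rw [show Formula.jtr '' Γ = id '' Γ from
      Set.image_congr (fun B hB => jtr_eq_self (hΓ B hB)), Set.image_id]
  have fwd : Deriv false true Γ A → Deriv true false Γ (.neg (.neg A)) := by
    intro h
    have h2 := glivenko_main h
    rwa [hΓeq, jtr_eq_self hA] at h2
  have bwd : Deriv true false Γ (.neg (.neg A)) → Deriv false true Γ A := by
    intro h
    exact .raaR rfl (.negE ((nj_to_nk h).weaken (Set.subset_insert _ _))
      (.hyp (Set.mem_insert _ _)))
  refine ⟨⟨fwd, bwd⟩, ?_, ?_⟩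
  · intro h
    exact .negE ((fwd h).weaken (Set.subset_insert _ _)) (.hyp (Set.mem_insert _ _))
  · intro h
    exact bwd (.negI h)
end

section
/- Glivenko's theorem (minimal version): if A and all formulas in Γ contain no occurrence of → and no occurrence of ∀, then the following are equivalent: (a) Γ ⊢_NK A; (b) Γ ⊢_NM ¬¬A; (c) Γ, ¬A ⊢_NM ⊥. -/

theorem Deriv.weaken_s6 {e r : Bool} {Γ Δ : Set Formula} {A : Formula}
    (h : Deriv e r Γ A) (hs : Γ ⊆ Δ) : Deriv e r Δ A := by
  induction h generalizing Δ with
  | hyp hA => exact .hyp (hs hA)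
  | topI => exact .topI
  | negI _ ih => exact .negI (ih (Set.insert_subset_insert hs))
  | negE _ _ ih1 ih2 => exact .negE (ih1 hs) (ih2 hs)
  | conjI _ _ ih1 ih2 => exact .conjI (ih1 hs) (ih2 hs)
  | conjE1 _ ih => exact .conjE1 (ih hs)
  | conjE2 _ ih => exact .conjE2 (ih hs)
  | disjI1 _ ih => exact .disjI1 (ih hs)
  | disjI2 _ ih => exact .disjI2 (ih hs)
  | disjE _ _ _ ih ihA ihB =>
      exact .disjE (ih hs) (ihA (Set.insert_subset_insert hs)) (ihB (Set.insert_subset_insert hs))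
  | implI _ ih => exact .implI (ih (Set.insert_subset_insert hs))
  | implE _ _ ih1 ih2 => exact .implE (ih1 hs) (ih2 hs)
  | allI _ ih => exact .allI (ih (Set.image_mono hs))
  | allE t _ ih => exact .allE t (ih hs)
  | exI t _ ih => exact .exI t (ih hs)
  | exE _ _ ih1 ih2 =>
      exact .exE (ih1 hs) (ih2 (Set.insert_subset_insert (Set.image_mono hs)))
  | efqR he _ ih => exact .efqR he (ih hs)
  | raaR hr _ ih => exact .raaR hr (ih (Set.insert_subset_insert hs))

theorem nm_to_nk {Γ : Set Formula} {A : Formula} (h : NM Γ A) : NK Γ A := by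
  induction h with
  | hyp hA => exact .hyp hA
  | topI => exact .topI
  | negI _ ih => exact .negI ih
  | negE _ _ ih1 ih2 => exact .negE ih1 ih2
  | conjI _ _ ih1 ih2 => exact .conjI ih1 ih2
  | conjE1 _ ih => exact .conjE1 ih
  | conjE2 _ ih => exact .conjE2 ih
  | disjI1 _ ih => exact .disjI1 ih
  | disjI2 _ ih => exact .disjI2 ih
  | disjE _ _ _ ih ihA ihB => exact .disjE ih ihA ihB
  | implI _ ih => exact .implI ih
  | implE _ _ ih1 ih2 => exact .implE ih1 ih2
  | allI _ ih => exact .allI ih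
  | allE t _ ih => exact .allE t ih
  | exI t _ ih => exact .exI t ih
  | exE _ _ ih1 ih2 => exact .exE ih1 ih2
  | efqR he _ _ => exact absurd he (by simp)
  | raaR hr _ _ => exact absurd hr (by simp)

theorem NM.dni {Γ : Set Formula} {A : Formula} (h : NM Γ A) : NM Γ (.neg (.neg A)) :=
  .negI (.negE (.hyp (Set.mem_insert _ _)) (Deriv.weaken_s6 h (Set.subset_insert _ _)))

theorem NM.dn_bind {Γ : Set Formula} {A B : Formula}
    (h1 : NM Γ (.neg (.neg A))) (h2 : NM (insert A Γ) B) : NM Γ (.neg (.neg B)) :=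
  .negI (.negE (Deriv.weaken_s6 h1 (Set.subset_insert _ _))
    (.negI (.negE (.hyp (Set.mem_insert_of_mem _ (Set.mem_insert _ _)))
      (Deriv.weaken_s6 h2 (Set.insert_subset_insert (Set.subset_insert _ _))))))

theorem NM.dn_bind' {Γ : Set Formula} {A B : Formula}
    (h1 : NM Γ (.neg (.neg A))) (h2 : NM (insert A Γ) (.neg (.neg B))) :
    NM Γ (.neg (.neg B)) :=
  .negI (.negE (Deriv.weaken_s6 h1 (Set.subset_insert _ _))
    (.negI (.negE (Deriv.weaken_s6 h2 (Set.insert_subset_insert (Set.subset_insert _ _)))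
      (.hyp (Set.mem_insert_of_mem _ (Set.mem_insert _ _))))))

theorem NM.dn_bot {Γ : Set Formula} (h : NM Γ (.neg (.neg .bot))) : NM Γ .bot :=
  .negE h (.negI (.hyp (Set.mem_insert _ _)))

theorem NM.tne {Γ : Set Formula} {A : Formula}
    (h : NM Γ (.neg (.neg (.neg A)))) : NM Γ (.neg A) :=
  .negI (.negE (Deriv.weaken_s6 h (Set.subset_insert _ _)) (NM.dni (.hyp (Set.mem_insert _ _))))

theorem mtr_lift (A : Formula) (k : ℕ) : (A.lift k).mtr = A.mtr.lift k := by
  induction A generalizing k <;> simp [Formula.lift, Formula.mtr, *]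

theorem mtr_subst (A : Formula) (k : ℕ) (s : Term) :
    (A.subst k s).mtr = A.mtr.subst k s := by
  induction A generalizing k s <;> simp [Formula.subst, Formula.mtr, *]

theorem mtr_eq (A : Formula) (h : A.forallFree ∧ A.impFree) : A.mtr = A := by
  induction A <;>
    simp_all [Formula.forallFree, Formula.impFree, Formula.mtr]

theorem mtr_image_lift (Γ : Set Formula) :
    Formula.mtr '' (Formula.lift 0 '' Γ) = Formula.lift 0 '' (Formula.mtr '' Γ) := by
  rw [Set.image_image, Set.image_image]
  exact Set.image_congr' (fun B => mtr_lift B 0)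

theorem glivenko_aux {Γ : Set Formula} {A : Formula} (h : NK Γ A) :
    NM (Formula.mtr '' Γ) (.neg (.neg A.mtr)) := by
  induction h with
  | hyp hA => exact NM.dni (.hyp ⟨_, hA, rfl⟩)
  | topI => exact NM.dni .topI
  | @negI Γ A _ ih =>
      rw [Set.image_insert_eq] at ih
      exact NM.dni (.negI (NM.dn_bot ih))
  | negE _ _ ih1 ih2 => exact NM.dni (.negE ih1 ih2)
  | conjI _ _ ih1 ih2 =>
      exact NM.dn_bind' ih1 (NM.dn_bind
        (Deriv.weaken_s6 ih2 (Set.subset_insert _ _))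
        (.conjI (.hyp (Set.mem_insert_of_mem _ (Set.mem_insert _ _)))
          (.hyp (Set.mem_insert _ _))))
  | conjE1 _ ih => exact NM.dn_bind ih (.conjE1 (.hyp (Set.mem_insert _ _)))
  | conjE2 _ ih => exact NM.dn_bind ih (.conjE2 (.hyp (Set.mem_insert _ _)))
  | disjI1 _ ih => exact NM.dn_bind ih (.disjI1 (.hyp (Set.mem_insert _ _)))
  | disjI2 _ ih => exact NM.dn_bind ih (.disjI2 (.hyp (Set.mem_insert _ _)))
  | @disjE Γ A B C _ _ _ ih ihA ihB =>
      rw [Set.image_insert_eq] at ihA ihB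
      exact NM.dn_bind' ih (.disjE (.hyp (Set.mem_insert _ _))
        (Deriv.weaken_s6 ihA (Set.insert_subset_insert (Set.subset_insert _ _)))
        (Deriv.weaken_s6 ihB (Set.insert_subset_insert (Set.subset_insert _ _))))
  | @implI Γ A B _ ih =>
      rw [Set.image_insert_eq] at ih
      -- goal : NM Γ' ¬¬(disj (neg a) b)
      refine .negI ?_
      have hnna : NM (insert (Formula.neg (.disj (.neg A.mtr) B.mtr)) (Formula.mtr '' Γ))
          (.neg (.neg A.mtr)) :=
        .negI (.negE (.hyp (Set.mem_insert_of_mem _ (Set.mem_insert _ _)))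
          (.disjI1 (.hyp (Set.mem_insert _ _))))
      have hnnb := NM.dn_bind' hnna
        (Deriv.weaken_s6 ih (Set.insert_subset_insert (Set.subset_insert _ _)))
      have hnb : NM (insert (Formula.neg (.disj (.neg A.mtr) B.mtr)) (Formula.mtr '' Γ))
          (.neg B.mtr) :=
        .negI (.negE (.hyp (Set.mem_insert_of_mem _ (Set.mem_insert _ _)))
          (.disjI2 (.hyp (Set.mem_insert _ _))))
      exact .negE hnnb hnb
  | @implE Γ A B _ _ ih1 ih2 =>
      refine NM.dn_bind' ih1 (.disjE (.hyp (Set.mem_insert _ _)) ?_ ?_)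
      · -- branch ¬a : derive ⊥, then ¬¬b
        have hbot : NM (insert (Formula.neg A.mtr)
            (insert (Formula.disj (.neg A.mtr) B.mtr) (Formula.mtr '' Γ))) .bot :=
          .negE (Deriv.weaken_s6 ih2
              ((Set.subset_insert _ _).trans (Set.subset_insert _ _)))
            (.hyp (Set.mem_insert _ _))
        exact .negI (Deriv.weaken_s6 hbot (Set.subset_insert _ _))
      · exact NM.dni (.hyp (Set.mem_insert _ _))
  | @allI Γ A _ ih =>
      rw [mtr_image_lift] at ih
      refine NM.dni (.negI ?_)
      refine .exE (A := Formula.neg A.mtr) (C := Formula.bot) (.hyp (Set.mem_insert _ _)) ?_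
      rw [Set.image_insert_eq]
      exact .negE
        (Deriv.weaken_s6 ih (fun x hx => Set.mem_insert_of_mem _
          (Set.mem_insert_of_mem _ hx)))
        (.hyp (Set.mem_insert _ _))
  | @allE Γ A t _ ih =>
      rw [mtr_subst]
      have hne := NM.tne ih
      refine .negI (.negE (Deriv.weaken_s6 hne (Set.subset_insert _ _)) ?_)
      exact .exI t (.hyp (Set.mem_insert _ _))
  | @exI Γ A t _ ih =>
      rw [mtr_subst] at ih
      exact NM.dn_bind ih (.exI t (.hyp (Set.mem_insert _ _)))
  | @exE Γ A C _ _ ih1 ih2 =>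
      rw [Set.image_insert_eq, mtr_image_lift, mtr_lift] at ih2
      refine NM.dn_bind' ih1 ?_
      refine .exE (A := A.mtr) (C := Formula.neg (.neg C.mtr)) (.hyp (Set.mem_insert _ _)) ?_
      show NM _ (Formula.lift 0 (.neg (.neg C.mtr)))
      exact Deriv.weaken_s6 ih2 (Set.insert_subset_insert
        (Set.image_mono (Set.subset_insert _ _)))
  | efqR he _ _ => exact absurd he (by simp)
  | @raaR Γ A hr _ ih =>
      rw [Set.image_insert_eq] at ih
      exact .negI (NM.dn_bot ih)

/-- Glivenko's theorem, minimal version. -/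
theorem glivenko_minimal (Γ : Set Formula) (A : Formula)
    (hA : A.forallFree ∧ A.impFree) (hΓ : ∀ B ∈ Γ, B.forallFree ∧ B.impFree) :
    (NK Γ A ↔ NM Γ (.neg (.neg A))) ∧
    (NK Γ A ↔ NM (insert (.neg A) Γ) .bot) := by
  have himg : Formula.mtr '' Γ = Γ := by
    apply Set.Subset.antisymm
    · rintro _ ⟨B, hB, rfl⟩; rw [mtr_eq B (hΓ B hB)]; exact hB
    · exact fun B hB => ⟨B, hB, mtr_eq B (hΓ B hB)⟩
  have hab : NK Γ A ↔ NM Γ (.neg (.neg A)) := by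
    constructor
    · intro h
      have := glivenko_aux h
      rwa [himg, mtr_eq A hA] at this
    · intro h
      exact .raaR rfl (.negE (Deriv.weaken_s6 (nm_to_nk h) (Set.subset_insert _ _))
        (.hyp (Set.mem_insert _ _)))
  have hbc : NM Γ (.neg (.neg A)) ↔ NM (insert (.neg A) Γ) .bot := by
    constructor
    · intro h
      exact .negE (Deriv.weaken_s6 h (Set.subset_insert _ _)) (.hyp (Set.mem_insert _ _))
    · exact .negI
  exact ⟨hab, hab.trans hbc⟩
end

section
/- Relative consistency (minimal): for a set of formulas Γ containing no occurrence of → and no occurrence of ∀, Γ ⊢_NK ⊥ if and only if Γ ⊢_NM ⊥. -/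
namespace MyAux
open Formula

lemma weaken {e r : Bool} {Γ Δ : Set Formula} {A : Formula}
    (h : Deriv e r Γ A) (hs : Γ ⊆ Δ) : Deriv e r Δ A := by
  induction h generalizing Δ with
  | hyp hA => exact Deriv.hyp (hs hA)
  | topI => exact Deriv.topI
  | negI _ ih => exact Deriv.negI (ih (Set.insert_subset_insert hs))
  | negE _ _ ih1 ih2 => exact Deriv.negE (ih1 hs) (ih2 hs)
  | conjI _ _ ih1 ih2 => exact Deriv.conjI (ih1 hs) (ih2 hs)
  | conjE1 _ ih => exact Deriv.conjE1 (ih hs)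
  | conjE2 _ ih => exact Deriv.conjE2 (ih hs)
  | disjI1 _ ih => exact Deriv.disjI1 (ih hs)
  | disjI2 _ ih => exact Deriv.disjI2 (ih hs)
  | disjE _ _ _ ih ih1 ih2 =>
      exact Deriv.disjE (ih hs) (ih1 (Set.insert_subset_insert hs))
        (ih2 (Set.insert_subset_insert hs))
  | implI _ ih => exact Deriv.implI (ih (Set.insert_subset_insert hs))
  | implE _ _ ih1 ih2 => exact Deriv.implE (ih1 hs) (ih2 hs)
  | allI _ ih => exact Deriv.allI (ih (Set.image_mono hs))
  | allE t _ ih => exact Deriv.allE t (ih hs)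
  | exI t _ ih => exact Deriv.exI t (ih hs)
  | exE _ _ ih ih2 =>
      exact Deriv.exE (ih hs) (ih2 (Set.insert_subset_insert (Set.image_mono hs)))
  | efqR he _ ih => exact Deriv.efqR he (ih hs)
  | raaR hr _ ih => exact Deriv.raaR hr (ih (Set.insert_subset_insert hs))

lemma w1 {e r : Bool} {Γ : Set Formula} {A B : Formula}
    (h : Deriv e r Γ A) : Deriv e r (insert B Γ) A :=
  weaken h (Set.subset_insert _ _)

lemma mono {e r e' r' : Bool} (he : e = true → e' = true) (hr : r = true → r' = true)
    {Γ : Set Formula} {A : Formula} (h : Deriv e r Γ A) : Deriv e' r' Γ A := by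
  induction h with
  | hyp hA => exact Deriv.hyp hA
  | topI => exact Deriv.topI
  | negI _ ih => exact Deriv.negI ih
  | negE _ _ ih1 ih2 => exact Deriv.negE ih1 ih2
  | conjI _ _ ih1 ih2 => exact Deriv.conjI ih1 ih2
  | conjE1 _ ih => exact Deriv.conjE1 ih
  | conjE2 _ ih => exact Deriv.conjE2 ih
  | disjI1 _ ih => exact Deriv.disjI1 ih
  | disjI2 _ ih => exact Deriv.disjI2 ih
  | disjE _ _ _ ih ih1 ih2 => exact Deriv.disjE ih ih1 ih2
  | implI _ ih => exact Deriv.implI ih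
  | implE _ _ ih1 ih2 => exact Deriv.implE ih1 ih2
  | allI _ ih => exact Deriv.allI ih
  | allE t _ ih => exact Deriv.allE t ih
  | exI t _ ih => exact Deriv.exI t ih
  | exE _ _ ih ih2 => exact Deriv.exE ih ih2
  | efqR h0 _ ih => exact Deriv.efqR (he h0) ih
  | raaR h0 _ ih => exact Deriv.raaR (hr h0) ih

/-- Double negation. -/
def nn (A : Formula) : Formula := .neg (.neg A)

lemma dni {e r : Bool} {Γ : Set Formula} {A : Formula}
    (h : Deriv e r Γ A) : Deriv e r Γ (nn A) :=
  Deriv.negI (Deriv.negE (Deriv.hyp (Set.mem_insert _ _)) (w1 h))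

/-- Triple negation elimination. -/
lemma tne {e r : Bool} {Γ : Set Formula} {A : Formula}
    (h : Deriv e r Γ (nn (.neg A))) : Deriv e r Γ (.neg A) :=
  Deriv.negI (Deriv.negE (w1 h) (dni (Deriv.hyp (Set.mem_insert _ _))))

lemma bot_nn {e r : Bool} {Γ : Set Formula}
    (h : Deriv e r Γ (nn .bot)) : Deriv e r Γ .bot :=
  Deriv.negE h (Deriv.negI (Deriv.hyp (Set.mem_insert _ _)))

lemma mtr_lift (A : Formula) : ∀ k, (A.lift k).mtr = A.mtr.lift k := by
  induction A <;> intro k <;> simp [Formula.lift, Formula.mtr, *]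

lemma mtr_subst (s : Term) (A : Formula) : ∀ k, (A.subst k s).mtr = A.mtr.subst k s := by
  induction A generalizing s <;> intro k <;> simp [Formula.subst, Formula.mtr, *]

lemma mtr_fix : ∀ B : Formula, B.forallFree → B.impFree → B.mtr = B := by
  intro B
  induction B <;> intro h1 h2 <;>
    simp [Formula.mtr, Formula.forallFree, Formula.impFree] at * <;> simp_all

lemma image_mtr_lift (Γ : Set Formula) :
    Formula.mtr '' (Formula.lift 0 '' Γ) = Formula.lift 0 '' (Formula.mtr '' Γ) := by
  rw [Set.image_image, Set.image_image]
  exact Set.image_congr' (fun B => mtr_lift B 0)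

lemma main {e r : Bool} {Γ : Set Formula} {A : Formula} (h : Deriv e r Γ A) :
    Deriv false false (Formula.mtr '' Γ) (nn A.mtr) := by
  induction h with
  | @hyp Γ A hA => exact dni (Deriv.hyp ⟨A, hA, rfl⟩)
  | topI => exact dni Deriv.topI
  | @negI Γ A _ ih =>
      rw [Set.image_insert_eq] at ih
      exact dni (Deriv.negI (bot_nn ih))
  | @negE Γ A _ _ ih1 ih2 =>
      exact dni (Deriv.negE ih2 (tne ih1))
  | @conjI Γ A B _ _ ih1 ih2 =>
      refine Deriv.negI (Deriv.negE (w1 ih1) (Deriv.negI (Deriv.negE (w1 (w1 ih2)) (Deriv.negI (Deriv.negE (A := Formula.conj A.mtr B.mtr) (Deriv.hyp (by simp [Formula.mtr])) (Deriv.conjI (Deriv.hyp (by simp [Formula.mtr])) (Deriv.hyp (by simp [Formula.mtr]))))))))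
  | @conjE1 Γ A B _ ih =>
      refine Deriv.negI (Deriv.negE (w1 ih) (Deriv.negI (Deriv.negE (Deriv.hyp (by simp [Formula.mtr])) (Deriv.conjE1 (A := A.mtr) (B := B.mtr) (Deriv.hyp (by simp [Formula.mtr]))))))
  | @conjE2 Γ A B _ ih =>
      refine Deriv.negI (Deriv.negE (w1 ih) (Deriv.negI (Deriv.negE (Deriv.hyp (by simp [Formula.mtr])) (Deriv.conjE2 (A := A.mtr) (B := B.mtr) (Deriv.hyp (by simp [Formula.mtr]))))))
  | @disjI1 Γ A B _ ih =>
      refine Deriv.negI (Deriv.negE (w1 ih) (Deriv.negI (Deriv.negE (A := Formula.disj A.mtr B.mtr) (Deriv.hyp (by simp [Formula.mtr])) (Deriv.disjI1 (Deriv.hyp (by simp [Formula.mtr]))))))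
  | @disjI2 Γ A B _ ih =>
      refine Deriv.negI (Deriv.negE (w1 ih) (Deriv.negI (Deriv.negE (A := Formula.disj A.mtr B.mtr) (Deriv.hyp (by simp [Formula.mtr])) (Deriv.disjI2 (Deriv.hyp (by simp [Formula.mtr]))))))
  | @disjE Γ A B C _ _ _ ih ih1 ih2 =>
      rw [Set.image_insert_eq] at ih1 ih2
      refine Deriv.negI (Deriv.negE (w1 ih) (Deriv.negI (Deriv.disjE (Deriv.hyp (Set.mem_insert _ _)) (Deriv.negE (weaken ih1 ?_) (Deriv.hyp ?_)) (Deriv.negE (weaken ih2 ?_) (Deriv.hyp ?_)))))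
      · exact Set.insert_subset_insert ((Set.subset_insert _ _).trans (Set.subset_insert _ _))
      · simp [Formula.mtr]
      · exact Set.insert_subset_insert ((Set.subset_insert _ _).trans (Set.subset_insert _ _))
      · simp [Formula.mtr]
  | @implI Γ A B _ ih =>
      rw [Set.image_insert_eq] at ih
      refine Deriv.negI (Deriv.negE (Deriv.hyp (Set.mem_insert _ _)) (Deriv.disjI1 (Deriv.negI (Deriv.negE (weaken ih (Set.insert_subset_insert (Set.subset_insert _ _))) (Deriv.negI (Deriv.negE (A := Formula.disj (Formula.neg A.mtr) B.mtr) (Deriv.hyp (by simp [Formula.mtr])) (Deriv.disjI2 (Deriv.hyp (by simp [Formula.mtr])))))))))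
  | @implE Γ A B _ _ ih1 ih2 =>
      refine Deriv.negI (Deriv.negE (w1 ih1) (Deriv.negI (Deriv.disjE (Deriv.hyp (Set.mem_insert _ _)) (Deriv.negE (w1 (w1 (w1 ih2))) (Deriv.hyp (Set.mem_insert _ _))) (Deriv.negE (Deriv.hyp (by simp : Formula.neg B.mtr ∈ _)) (Deriv.hyp (Set.mem_insert _ _))))))
  | @allI Γ A _ ih =>
      rw [image_mtr_lift] at ih
      refine dni (Deriv.negI (Deriv.exE (Deriv.hyp (Set.mem_insert _ _)) (Deriv.negE (weaken ih ?_) (Deriv.hyp (Set.mem_insert _ _)))))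
      exact (Set.image_mono (Set.subset_insert _ _)).trans (Set.subset_insert _ _)
  | @allE Γ A t _ ih =>
      rw [mtr_subst]
      refine Deriv.negI (Deriv.negE (tne (w1 ih)) (Deriv.exI t (Deriv.hyp (Set.mem_insert _ _))))
  | @exI Γ A t _ ih =>
      rw [mtr_subst] at ih
      refine Deriv.negI (Deriv.negE (w1 ih) (Deriv.negI (Deriv.negE (A := Formula.ex A.mtr) (Deriv.hyp (by simp [Formula.mtr])) (Deriv.exI t (Deriv.hyp (Set.mem_insert _ _))))))
  | @exE Γ A C _ _ ih ih2 =>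
      rw [Set.image_insert_eq, image_mtr_lift, mtr_lift] at ih2
      refine Deriv.negI (Deriv.negE (w1 ih) (Deriv.negI (Deriv.exE (Deriv.hyp (Set.mem_insert _ _)) (Deriv.negE (weaken ih2 ?_) (Deriv.hyp ?_)))))
      · exact Set.insert_subset_insert (Set.image_mono ((Set.subset_insert _ _).trans (Set.subset_insert _ _)))
      · exact Set.mem_insert_iff.mpr (Or.inr (Set.mem_image_of_mem _ (Set.mem_insert_iff.mpr (Or.inr (Set.mem_insert _ _)))))
  | @efqR Γ A _ _ ih =>
      exact Deriv.negI (w1 (bot_nn ih))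
  | @raaR Γ A _ _ ih =>
      rw [Set.image_insert_eq] at ih
      exact Deriv.negI (bot_nn ih)

end MyAux


/-- Relative consistency, minimal version. -/
theorem relative_consistency_minimal (Γ : Set Formula)
    (hΓ : ∀ B ∈ Γ, B.forallFree ∧ B.impFree) :
    NK Γ .bot ↔ NM Γ .bot := by
  have himg : Formula.mtr '' Γ = Γ := by
    apply Set.Subset.antisymm
    · rintro x ⟨B, hB, rfl⟩
      rw [MyAux.mtr_fix B (hΓ B hB).1 (hΓ B hB).2]; exact hB
    · intro B hB
      exact ⟨B, hB, MyAux.mtr_fix B (hΓ B hB).1 (hΓ B hB).2⟩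
  constructor
  · intro h
    have := MyAux.main h
    rw [himg] at this
    exact MyAux.bot_nn this
  · intro h
    exact MyAux.mono (fun h => h) (fun h => by cases h) h
end
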